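/- If G and H are distance critical simple graphs, then their tensor product G × H is distance critical; more precisely, every vertex of G × H admits a determining pair. -/

import Mathlib

/-- A graph is *distance critical* if for every vertex `v` there is a pair of vertices of
`G − v` whose distance in `G − v` differs from their distance in `G`
(distances are `ℕ∞`-valued, `⊤` when there is no connecting path). -/
def IsDistanceCritical {V : Type*} (G : SimpleGraph V) : Prop :=
  ∀ v : V, ∃ x y : ({v}ᶜ : Set V),
    (G.induce ({v}ᶜ : Set V)).edist x y ≠ G.edist (x : V) (y : V)

/-- `{a, b}` is a *determining pair* for `v` : `a` and `b` are distinct, nonadjacent,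
and `v` is their unique common neighbor. -/
def IsDeterminingPair {V : Type*} (G : SimpleGraph V) (v a b : V) : Prop :=
  a ≠ b ∧ ¬ G.Adj a b ∧ G.Adj a v ∧ G.Adj b v ∧
    ∀ w : V, G.Adj a w → G.Adj b w → w = v

/-- The tensor (categorical) product of two simple graphs. -/
def tensorProd {α β : Type*} (G : SimpleGraph α) (H : SimpleGraph β) :
    SimpleGraph (α × β) where
  Adj p q := G.Adj p.1 q.1 ∧ H.Adj p.2 q.2
  symm := ⟨fun p q ⟨h1, h2⟩ => ⟨h1.symm, h2.symm⟩⟩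
  loopless := ⟨fun p ⟨h1, _⟩ => G.irrefl h1⟩

section helpers
open SimpleGraph
variable {V : Type*} {G : SimpleGraph V}

/-- Hom from an induced subgraph into the ambient graph. -/
def inducedHom (G : SimpleGraph V) (s : Set V) : G.induce s →g G := ⟨Subtype.val, fun h => h⟩

lemma edist_le_induce (s : Set V) (x y : s) :
    G.edist x y ≤ (G.induce s).edist x y := by
  rcases eq_or_ne ((G.induce s).edist x y) ⊤ with h | h
  · simp [h]
  · obtain ⟨p, hp⟩ := SimpleGraph.exists_walk_of_edist_ne_top h
    calc G.edist x y ≤ ((p.map (inducedHom G s)).length : ℕ∞) := SimpleGraph.edist_le _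
    _ = p.length := by rw [SimpleGraph.Walk.length_map]
    _ = _ := hp

lemma walk_to_induce {s : Set V} :
    ∀ {x y : V} (p : G.Walk x y) (hx : x ∈ s) (hy : y ∈ s),
    (∀ z ∈ p.support, z ∈ s) →
      ∃ q : (G.induce s).Walk ⟨x, hx⟩ ⟨y, hy⟩, q.length = p.length
  | _, _, SimpleGraph.Walk.nil, _, _, _ => ⟨.nil, rfl⟩
  | x, y, @SimpleGraph.Walk.cons _ _ _ c _ h p, hx, hy, hp => by
    have hc : c ∈ s := hp c (by simp)
    obtain ⟨q, hq⟩ := walk_to_induce p hc hy (fun z hz => hp z (by simp [hz]))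
    exact ⟨.cons (show (G.induce s).Adj ⟨x, hx⟩ ⟨c, hc⟩ from h) q, by simp [hq]⟩

lemma edist_induce_le {s : Set V} {x y : V} (hx : x ∈ s) (hy : y ∈ s)
    (p : G.Walk x y) (hp : ∀ z ∈ p.support, z ∈ s) :
    (G.induce s).edist ⟨x, hx⟩ ⟨y, hy⟩ ≤ p.length := by
  obtain ⟨q, hq⟩ := walk_to_induce p hx hy hp
  exact hq ▸ SimpleGraph.edist_le q

/-- A distance-critical graph admits a determining pair at every vertex. -/
lemma exists_detPair (G : SimpleGraph V) (hG : IsDistanceCritical G) (v : V) :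
    ∃ a b : V, IsDeterminingPair G v a b := by
  classical
  obtain ⟨x, y, hxy⟩ := hG v
  have hle := edist_le_induce ({v}ᶜ : Set V) x y (G := G)
  have hlt : G.edist (x : V) (y : V) < (G.induce ({v}ᶜ : Set V)).edist x y :=
    lt_of_le_of_ne hle (Ne.symm hxy)
  have hnetop : G.edist (x : V) (y : V) ≠ ⊤ := hlt.ne_top
  obtain ⟨p, hp⟩ := SimpleGraph.exists_walk_of_edist_ne_top hnetop
  set q := p.bypass with hqdef
  have hqpath : q.IsPath := p.bypass_isPath
  have hql : (q.length : ℕ∞) = G.edist (x : V) (y : V) :=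
    le_antisymm (hp ▸ by exact_mod_cast p.length_bypass_le) (SimpleGraph.edist_le q)
  have hxv : (x : V) ≠ v := x.2
  have hyv : (y : V) ≠ v := y.2
  -- v must lie on q
  have hvq : v ∈ q.support := by
    by_contra hv
    have h1 : (G.induce ({v}ᶜ : Set V)).edist x y ≤ q.length := by
      have := edist_induce_le x.2 y.2 q (fun z hz => fun (h : z = v) => hv (h ▸ hz))
      simpa using this
    exact absurd ((h1.trans_eq hql).trans_lt hlt) (lt_irrefl _)
  set q1 := q.takeUntil v hvq with hq1def
  set q2 := q.dropUntil v hvq with hq2def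
  have hspec : q1.append q2 = q := q.take_spec hvq
  have hq1path : q1.IsPath := hqpath.takeUntil hvq
  have hq2path : q2.IsPath := hqpath.dropUntil hvq
  obtain ⟨b, hvb, r2, hq2eq⟩ := q2.exists_eq_cons_of_ne (Ne.symm hyv)
  obtain ⟨a, hva, r1, hq1eq⟩ := q1.reverse.exists_eq_cons_of_ne (Ne.symm hxv)
  have hvr1 : v ∉ r1.support := by
    have := hq1path.reverse
    rw [hq1eq] at this
    exact fun hmem => (List.nodup_cons.mp (by simpa using this.support_nodup)).1 hmem
  have hvr2 : v ∉ r2.support := by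
    have := hq2path
    rw [hq2eq] at this
    exact fun hmem => (List.nodup_cons.mp (by simpa using this.support_nodup)).1 hmem
  have hlen : q.length = r1.length + r2.length + 2 := by
    have h1 : q1.length = r1.length + 1 := by
      have := congrArg SimpleGraph.Walk.length hq1eq
      simpa [SimpleGraph.Walk.length_reverse] using this
    have h2 : q2.length = r2.length + 1 := by
      have := congrArg SimpleGraph.Walk.length hq2eq
      simpa using this
    have := congrArg SimpleGraph.Walk.length hspec
    rw [SimpleGraph.Walk.length_append, h1, h2] at this
    omega
  set w1 : G.Walk (x : V) a := r1.reverse with hw1def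
  have hvw1 : v ∉ w1.support := by
    rw [hw1def, SimpleGraph.Walk.support_reverse]
    simpa using hvr1
  -- generic contradiction from short walks in G
  have short : ∀ (W : G.Walk (x : V) (y : V)), W.length < q.length → False := by
    intro W hW
    have h1 : G.edist (x : V) (y : V) ≤ W.length := SimpleGraph.edist_le W
    rw [← hql] at h1
    exact absurd (by exact_mod_cast h1) (Nat.not_le.mpr hW)
  -- generic contradiction from walks of length ≤ q.length avoiding v
  have avoid : ∀ (W : G.Walk (x : V) (y : V)), W.length ≤ q.length →
      (∀ z ∈ W.support, z ≠ v) → False := by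
    intro W hW hWv
    have h1 : (G.induce ({v}ᶜ : Set V)).edist x y ≤ W.length := by
      have := edist_induce_le x.2 y.2 W (fun z hz => hWv z hz)
      simpa using this
    have h2 : (W.length : ℕ∞) ≤ G.edist (x : V) (y : V) := by
      rw [← hql]; exact_mod_cast hW
    exact absurd ((h1.trans h2).trans_lt hlt) (lt_irrefl _)
  refine ⟨a, b, ?_, ?_, hva.symm, hvb.symm, ?_⟩
  · intro hab'
    exact short (w1.append (hab' ▸ r2)) (by subst hab'; simp [SimpleGraph.Walk.length_append,
      hw1def, SimpleGraph.Walk.length_reverse]; omega)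
  · intro hab
    exact short (w1.append (SimpleGraph.Walk.cons hab r2))
      (by simp [SimpleGraph.Walk.length_append, hw1def, SimpleGraph.Walk.length_reverse]; omega)
  · intro w haw hbw
    by_contra hwv
    refine avoid (w1.append (SimpleGraph.Walk.cons haw (SimpleGraph.Walk.cons hbw.symm r2)))
      (by simp [SimpleGraph.Walk.length_append, hw1def, SimpleGraph.Walk.length_reverse]; omega)
      ?_
    intro z hz
    rw [SimpleGraph.Walk.mem_support_append_iff] at hz
    rcases hz with hz | hz
    · exact fun h => hvw1 (h ▸ hz)
    · simp only [SimpleGraph.Walk.support_cons, List.mem_cons] at hz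
      rcases hz with rfl | rfl | hz
      · exact hva.ne'
      · exact hwv
      · exact fun h => hvr2 (h ▸ hz)

lemma detPair_critical (G : SimpleGraph V) (v a b : V)
    (h : IsDeterminingPair G v a b) :
    ∃ x y : ({v}ᶜ : Set V),
      (G.induce ({v}ᶜ : Set V)).edist x y ≠ G.edist (x : V) (y : V) := by
  obtain ⟨hab, hnadj, hav, hbv, huniq⟩ := h
  have ha : a ∈ ({v}ᶜ : Set V) := hav.ne
  have hb : b ∈ ({v}ᶜ : Set V) := hbv.ne
  refine ⟨⟨a, ha⟩, ⟨b, hb⟩, ?_⟩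
  have h2 : G.edist a b = 2 := by
    have hle2 : G.edist a b ≤ 2 := by
      have := SimpleGraph.edist_le (SimpleGraph.Walk.cons hav
        (SimpleGraph.Walk.cons hbv.symm SimpleGraph.Walk.nil))
      simpa using this
    have h0 : G.edist a b ≠ 0 := fun h => hab (SimpleGraph.edist_eq_zero_iff.mp h)
    have h1 : G.edist a b ≠ 1 := fun h => hnadj (SimpleGraph.edist_eq_one_iff_adj.mp h)
    have hnt : G.edist a b ≠ ⊤ := (hle2.trans_lt (by exact_mod_cast ENat.coe_lt_top 2)).ne
    lift G.edist a b to ℕ using hnt with n hn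
    have : n ≤ 2 := by exact_mod_cast hle2
    have h0' : n ≠ 0 := by exact_mod_cast h0
    have h1' : n ≠ 1 := by exact_mod_cast h1
    have : n = 2 := by omega
    exact_mod_cast congrArg Nat.cast this
  rw [h2]
  intro hcon
  obtain ⟨q, hq⟩ := SimpleGraph.exists_walk_of_edist_eq_coe (k := 2) hcon
  obtain ⟨W, hWlen, hWv⟩ : ∃ W : G.Walk a b, W.length = 2 ∧ v ∉ W.support := by
    refine ⟨q.map (inducedHom G ({v}ᶜ : Set V)), ?_, ?_⟩
    · erw [SimpleGraph.Walk.length_map]; exact hq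
    · erw [SimpleGraph.Walk.support_map]
      intro hmem
      obtain ⟨z, hz, hzv⟩ := List.mem_map.mp hmem
      exact z.2 hzv
  cases W with
  | nil => simp at hWlen
  | cons e1 W1 =>
    cases W1 with
    | nil => simp at hWlen
    | cons e2 W2 =>
      have hW2 : W2.length = 0 := by
        simp only [SimpleGraph.Walk.length_cons] at hWlen
        omega
      have heq := SimpleGraph.Walk.eq_of_length_eq_zero hW2
      subst heq
      have hm := huniq _ e1 e2.symm
      exact hWv (by simp [SimpleGraph.Walk.support_cons, hm])
end helpers

lemma tensor_detPair {α β : Type*} {G : SimpleGraph α} {H : SimpleGraph β}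
    {u a b : α} {w c d : β}
    (h1 : IsDeterminingPair G u a b) (h2 : IsDeterminingPair H w c d) :
    IsDeterminingPair (tensorProd G H) (u, w) (a, c) (b, d) := by
  obtain ⟨hab, hnab, hau, hbu, huG⟩ := h1
  obtain ⟨hcd, hncd, hcw, hdw, huH⟩ := h2
  refine ⟨fun h => hab (congrArg Prod.fst h), fun h => hnab h.1,
    ⟨hau, hcw⟩, ⟨hbu, hdw⟩, ?_⟩
  rintro ⟨p1, p2⟩ ⟨ha1, ha2⟩ ⟨hb1, hb2⟩
  exact Prod.ext (huG _ ha1 hb1) (huH _ ha2 hb2)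

theorem stmt_11 {α β : Type*} [Fintype α] [Fintype β]
    (G : SimpleGraph α) (H : SimpleGraph β)
    (hG : IsDistanceCritical G) (hH : IsDistanceCritical H) :
    IsDistanceCritical (tensorProd G H) ∧
      ∀ p : α × β, ∃ a b : α × β, IsDeterminingPair (tensorProd G H) p a b := by
  have key : ∀ p : α × β, ∃ a b : α × β, IsDeterminingPair (tensorProd G H) p a b := by
    rintro ⟨u, w⟩
    obtain ⟨a, b, h1⟩ := exists_detPair G hG u
    obtain ⟨c, d, h2⟩ := exists_detPair H hH w
    exact ⟨(a, c), (b, d), tensor_detPair h1 h2⟩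
  refine ⟨fun v => ?_, key⟩
  obtain ⟨a, b, h⟩ := key v
  exact detPair_critical _ v a b h
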